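/- Let Φ: X ⊸ X be a contracting compact-valued multi-function on a complete metric space X with Lipschitz constant λ < 1. Then Fix(Φ) ⊆ K, where K is the unique nonempty compact set with Φ(K) = K; consequently the fixed fractal 𝔽(Φ) = closure(⋃_n Φⁿ(Fix(Φ))) equals K. -/
import Mathlib


open Set

/-- Image of a set under a set-valued map `Φ : X → Set X`. -/
def sImage {X : Type*} (Φ : X → Set X) (A : Set X) : Set X := ⋃ a ∈ A, Φ a

/-- Iterates `Φⁿ(A)`. -/
def sIter {X : Type*} (Φ : X → Set X) : ℕ → Set X → Set X
  | 0, A => A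
  | n + 1, A => sImage Φ (sIter Φ n A)

/-- Fixed points of a set-valued map. -/
def sFix {X : Type*} (Φ : X → Set X) : Set X := {x | x ∈ Φ x}

theorem stmt11 {X : Type*} [MetricSpace X] [CompleteSpace X]
    (Φ : X → Set X) (lam : ℝ) (hlam0 : 0 ≤ lam) (hlam : lam < 1)
    (hc : ∀ x, IsCompact (Φ x)) (hne : ∀ x, (Φ x).Nonempty)
    (hlip : ∀ x y, Metric.hausdorffDist (Φ x) (Φ y) ≤ lam * dist x y)
    (hFix : (sFix Φ).Nonempty)
    (K : Set X) (hK : IsCompact K) (hKne : K.Nonempty) (hKfix : sImage Φ K = K)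
    (hKuniq : ∀ K' : Set X, IsCompact K' → K'.Nonempty → sImage Φ K' = K' → K' = K) :
    sFix Φ ⊆ K ∧ closure (⋃ n, sIter Φ n (sFix Φ)) = K := by
  have hedist : ∀ x y : X, EMetric.hausdorffEdist (Φ x) (Φ y) ≠ ⊤ := fun x y =>
    Metric.hausdorffEdist_ne_top_of_nonempty_of_bounded (hne x) (hne y)
      (hc x).isBounded (hc y).isBounded
  -- Part 1 : Fix ⊆ K
  have hFixK : sFix Φ ⊆ K := by
    intro x hx
    obtain ⟨k, hkK, hk⟩ := hK.exists_infDist_eq_dist hKne x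
    have h1 : Metric.infDist x (Φ k) ≤ lam * dist x k := by
      calc Metric.infDist x (Φ k) ≤ Metric.hausdorffDist (Φ x) (Φ k) :=
            Metric.infDist_le_hausdorffDist_of_mem hx (hedist x k)
        _ ≤ lam * dist x k := hlip x k
    have hsub : Φ k ⊆ K := by
      rw [← hKfix]; exact fun y hy => mem_biUnion hkK hy
    have h2 : Metric.infDist x K ≤ Metric.infDist x (Φ k) :=
      Metric.infDist_le_infDist_of_subset hsub (hne k)
    have hd0 : 0 ≤ Metric.infDist x K := Metric.infDist_nonneg
    have hle : Metric.infDist x K ≤ lam * Metric.infDist x K := by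
      rw [hk] at *; linarith
    have : Metric.infDist x K = 0 := by nlinarith
    exact (hK.isClosed.mem_iff_infDist_zero hKne).2 this
  -- iterates are nonempty and contained in K
  have hiter_ne : ∀ n, (sIter Φ n (sFix Φ)).Nonempty := by
    intro n
    induction n with
    | zero => exact hFix
    | succ n ih =>
      obtain ⟨z, hz⟩ := ih
      obtain ⟨w, hw⟩ := hne z
      exact ⟨w, mem_biUnion hz hw⟩
  have hiter_sub : ∀ n, sIter Φ n (sFix Φ) ⊆ K := by
    intro n
    induction n with
    | zero => exact hFixK
    | succ n ih =>
      intro y hy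
      rw [← hKfix]
      simp only [sIter, sImage, mem_iUnion] at hy ⊢
      obtain ⟨a, ha, hya⟩ := hy
      exact ⟨a, ih ha, hya⟩
  -- key approximation lemma
  have key : ∀ n, ∀ y ∈ K,
      Metric.infDist y (sIter Φ n (sFix Φ)) ≤ lam ^ n * Metric.diam K := by
    intro n
    induction n with
    | zero =>
      intro y hy
      obtain ⟨x0, hx0⟩ := hFix
      simpa [sIter] using
        (Metric.infDist_le_dist_of_mem hx0).trans
          (Metric.dist_le_diam_of_mem hK.isBounded hy (hFixK hx0))
    | succ n ih =>
      intro y hy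
      have hy' : y ∈ sImage Φ K := by rw [hKfix]; exact hy
      simp only [sImage, mem_iUnion] at hy'
      obtain ⟨k, hkK, hyk⟩ := hy'
      refine le_of_forall_pos_le_add ?_
      intro ε hε
      have hlt : Metric.infDist k (sIter Φ n (sFix Φ)) < lam ^ n * Metric.diam K + ε :=
        lt_of_le_of_lt (ih k hkK) (by linarith)
      obtain ⟨z, hzS, hzd⟩ := (Metric.infDist_lt_iff (hiter_ne n)).1 hlt
      have h1 : Metric.infDist y (Φ z) ≤ lam * dist k z := by
        calc Metric.infDist y (Φ z) ≤ Metric.hausdorffDist (Φ k) (Φ z) :=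
              Metric.infDist_le_hausdorffDist_of_mem hyk (hedist k z)
          _ ≤ lam * dist k z := hlip k z
      have hsub : Φ z ⊆ sIter Φ (n + 1) (sFix Φ) := fun w hw => mem_biUnion hzS hw
      have h2 : Metric.infDist y (sIter Φ (n + 1) (sFix Φ)) ≤ Metric.infDist y (Φ z) :=
        Metric.infDist_le_infDist_of_subset hsub (hne z)
      have : lam * dist k z ≤ lam ^ (n + 1) * Metric.diam K + lam * ε := by
        have := mul_le_mul_of_nonneg_left hzd.le hlam0
        rw [pow_succ]; nlinarith
      have hlamε : lam * ε ≤ ε := by nlinarith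
      linarith
  -- conclusion
  refine ⟨hFixK, ?_⟩
  have hUne : (⋃ n, sIter Φ n (sFix Φ)).Nonempty :=
    ⟨hFix.choose, mem_iUnion.2 ⟨0, hFix.choose_spec⟩⟩
  apply subset_antisymm
  · exact closure_minimal (iUnion_subset hiter_sub) hK.isClosed
  · intro y hy
    have hle : ∀ n, Metric.infDist y (⋃ n, sIter Φ n (sFix Φ)) ≤ lam ^ n * Metric.diam K := by
      intro n
      exact (Metric.infDist_le_infDist_of_subset (subset_iUnion _ n) (hiter_ne n)).trans
        (key n y hy)
    have htend : Filter.Tendsto (fun n => lam ^ n * Metric.diam K) Filter.atTop (nhds 0) := by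
      have := (tendsto_pow_atTop_nhds_zero_of_lt_one hlam0 hlam).mul_const (Metric.diam K)
      simpa using this
    have h0 : Metric.infDist y (⋃ n, sIter Φ n (sFix Φ)) ≤ 0 :=
      ge_of_tendsto' htend hle
    have : Metric.infDist y (⋃ n, sIter Φ n (sFix Φ)) = 0 :=
      le_antisymm h0 Metric.infDist_nonneg
    exact (Metric.mem_closure_iff_infDist_zero hUne).2 this
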